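/- Let ℏ > 0 and m > 0 be real constants and let φ : ℝ → ℂ be continuous with compact support. Define ψ : ℝ × ℝ → ℂ by ψ(x,t) = (2πℏ)^(−1/2) ∫_ℝ φ(p) · exp(i(p·x − (p²/(2m))·t)/ℏ) dp. Then ψ satisfies the free-particle wave equation: for all x and t, i·ℏ·∂ψ/∂t (x,t) = −(ℏ²/(2m)) · ∂²ψ/∂x² (x,t). -/

import Mathlib

open Real Complex MeasureTheory

lemma osc_hasDerivAt (φ : ℝ → ℂ) (hφc : Continuous φ) (hφs : HasCompactSupport φ)
    (θ η : ℝ → ℝ) (hθ : Continuous θ) (hη : Continuous η) (s : ℝ) :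
    HasDerivAt (fun s : ℝ => ∫ p : ℝ, φ p * Complex.exp (Complex.I * ((θ p : ℂ) + (s : ℂ) * (η p : ℂ))))
      (∫ p : ℝ, φ p * (Complex.I * (η p : ℂ)) * Complex.exp (Complex.I * ((θ p : ℂ) + (s : ℂ) * (η p : ℂ)))) s := by
  have hcexp : ∀ x : ℝ, Continuous fun p : ℝ => Complex.exp (Complex.I * ((θ p : ℂ) + (x : ℂ) * (η p : ℂ))) := by
    intro x
    exact Complex.continuous_exp.comp (continuous_const.mul
      ((Complex.continuous_ofReal.comp hθ).add
        (continuous_const.mul (Complex.continuous_ofReal.comp hη))))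
  have hnorm : ∀ (x p : ℝ), ‖Complex.exp (Complex.I * ((θ p : ℂ) + (x : ℂ) * (η p : ℂ)))‖ = 1 := by
    intro x p
    have h : Complex.I * ((θ p : ℂ) + (x : ℂ) * (η p : ℂ)) = ((θ p + x * η p : ℝ) : ℂ) * Complex.I := by
      push_cast; ring
    rw [h, Complex.norm_exp_ofReal_mul_I]
  refine (hasDerivAt_integral_of_dominated_loc_of_deriv_le (𝕜 := ℝ) (μ := volume) (x₀ := s)
    (F := fun s p => φ p * Complex.exp (Complex.I * ((θ p : ℂ) + (s : ℂ) * (η p : ℂ))))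
    (F' := fun s p => φ p * (Complex.I * (η p : ℂ)) * Complex.exp (Complex.I * ((θ p : ℂ) + (s : ℂ) * (η p : ℂ))))
    (bound := fun p => ‖φ p‖ * |η p|) (Metric.ball_mem_nhds s one_pos) ?_ ?_ ?_ ?_ ?_ ?_).2
  · filter_upwards with x
    exact (hφc.mul (hcexp x)).aestronglyMeasurable
  · exact (hφc.mul (hcexp s)).integrable_of_hasCompactSupport hφs.mul_right
  · exact ((hφc.mul (continuous_const.mul (Complex.continuous_ofReal.comp hη))).mul
      (hcexp s)).aestronglyMeasurable
  · filter_upwards with p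
    intro x _
    rw [norm_mul, hnorm, mul_one, norm_mul, norm_mul, Complex.norm_I, one_mul,
      Complex.norm_real, Real.norm_eq_abs]
  · exact (hφc.norm.mul hη.abs).integrable_of_hasCompactSupport hφs.norm.mul_right
  · filter_upwards with p
    intro x _
    have h0 : HasDerivAt (fun x : ℝ => ((x : ℂ))) 1 x := Complex.ofRealCLM.hasDerivAt
    have h1 : HasDerivAt (fun x : ℝ => Complex.I * ((θ p : ℂ) + (x : ℂ) * (η p : ℂ)))
        (Complex.I * (η p : ℂ)) x := by
      simpa using ((h0.mul_const ((η p : ℂ))).const_add ((θ p : ℂ))).const_mul Complex.I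
    have := h1.cexp.const_mul (φ p)
    simpa [mul_comm, mul_assoc, mul_left_comm] using this

/-- Equations (29)-(32): the wave packet (27) solves the free Schrödinger equation (31). -/
theorem free_particle_wave_equation (ℏ m : ℝ) (hℏ : 0 < ℏ) (hm : 0 < m)
    (φ : ℝ → ℂ) (hφc : Continuous φ) (hφs : HasCompactSupport φ)
    (ψ : ℝ → ℝ → ℂ)
    (hψ : ∀ x t : ℝ, ψ x t = ((2 * π * ℏ) ^ (-(1 : ℝ) / 2) : ℝ) *
      ∫ p : ℝ, φ p *
        Complex.exp (Complex.I * ((p : ℂ) * (x : ℂ) - ((p : ℂ) ^ 2 / (2 * (m : ℂ))) * (t : ℂ)) / (ℏ : ℂ))) :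
    ∀ x t : ℝ,
      Complex.I * (ℏ : ℂ) * deriv (fun τ : ℝ => ψ x τ) t =
        -((ℏ : ℂ) ^ 2 / (2 * (m : ℂ))) * deriv (fun y : ℝ => deriv (fun z : ℝ => ψ z t) y) x := by
  intro x t
  have hℏ0 : (ℏ : ℂ) ≠ 0 := Complex.ofReal_ne_zero.mpr hℏ.ne'
  have hm0 : (m : ℂ) ≠ 0 := Complex.ofReal_ne_zero.mpr hm.ne'
  set c : ℂ := (((2 * π * ℏ) ^ (-(1 : ℝ) / 2) : ℝ) : ℂ) with hc
  -- t-direction data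
  have hθt : Continuous fun p : ℝ => p * x / ℏ := by continuity
  have hηt : Continuous fun p : ℝ => -(p ^ 2 / (2 * m * ℏ)) := by continuity
  -- x-direction data
  have hθx : Continuous fun p : ℝ => -(p ^ 2 * t / (2 * m * ℏ)) := by continuity
  have hηx : Continuous fun p : ℝ => p / ℏ := by continuity
  -- exponent identities
  have hexpT : ∀ (τ p : ℝ),
      Complex.I * ((p : ℂ) * (x : ℂ) - ((p : ℂ) ^ 2 / (2 * (m : ℂ))) * (τ : ℂ)) / (ℏ : ℂ)
      = Complex.I * (((p * x / ℏ : ℝ) : ℂ) + (τ : ℂ) * ((-(p ^ 2 / (2 * m * ℏ)) : ℝ) : ℂ)) := by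
    intro τ p; push_cast; field_simp; ring
  have hexpX : ∀ (z p : ℝ),
      Complex.I * ((p : ℂ) * (z : ℂ) - ((p : ℂ) ^ 2 / (2 * (m : ℂ))) * (t : ℂ)) / (ℏ : ℂ)
      = Complex.I * (((-(p ^ 2 * t / (2 * m * ℏ)) : ℝ) : ℂ) + (z : ℂ) * ((p / ℏ : ℝ) : ℂ)) := by
    intro z p; push_cast; field_simp; ring
  -- time derivative
  have Dt : HasDerivAt (fun τ : ℝ => ψ x τ)
      (c * ∫ p : ℝ, φ p * (Complex.I * ((-(p ^ 2 / (2 * m * ℏ)) : ℝ) : ℂ)) *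
        Complex.exp (Complex.I * (((p * x / ℏ : ℝ) : ℂ) + (t : ℂ) * ((-(p ^ 2 / (2 * m * ℏ)) : ℝ) : ℂ)))) t := by
    have h := (osc_hasDerivAt φ hφc hφs _ _ hθt hηt t).const_mul c
    have he : (fun τ : ℝ => ψ x τ) = fun τ : ℝ =>
        c * ∫ p : ℝ, φ p * Complex.exp (Complex.I * (((p * x / ℏ : ℝ) : ℂ) + (τ : ℂ) * ((-(p ^ 2 / (2 * m * ℏ)) : ℝ) : ℂ))) := by
      funext τ
      rw [hψ]
      congr 1
      refine integral_congr_ae (Filter.Eventually.of_forall fun p => ?_)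
      dsimp only
      rw [hexpT τ p]
    rw [he]
    exact h
  -- first x derivative, as a function of y
  have Dx : ∀ y : ℝ, HasDerivAt (fun z : ℝ => ψ z t)
      (c * ∫ p : ℝ, φ p * (Complex.I * ((p / ℏ : ℝ) : ℂ)) *
        Complex.exp (Complex.I * (((-(p ^ 2 * t / (2 * m * ℏ)) : ℝ) : ℂ) + (y : ℂ) * ((p / ℏ : ℝ) : ℂ)))) y := by
    intro y
    have h := (osc_hasDerivAt φ hφc hφs _ _ hθx hηx y).const_mul c
    have he : (fun z : ℝ => ψ z t) = fun z : ℝ =>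
        c * ∫ p : ℝ, φ p * Complex.exp (Complex.I * (((-(p ^ 2 * t / (2 * m * ℏ)) : ℝ) : ℂ) + (z : ℂ) * ((p / ℏ : ℝ) : ℂ))) := by
      funext z
      rw [hψ]
      congr 1
      refine integral_congr_ae (Filter.Eventually.of_forall fun p => ?_)
      dsimp only
      rw [hexpX z p]
    rw [he]
    exact h
  -- second x derivative
  set φ2 : ℝ → ℂ := fun p => c * (φ p * (Complex.I * ((p / ℏ : ℝ) : ℂ))) with hφ2
  have hφ2c : Continuous φ2 :=
    continuous_const.mul (hφc.mul (continuous_const.mul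
      (Complex.continuous_ofReal.comp hηx)))
  have hφ2s : HasCompactSupport φ2 := by
    have : HasCompactSupport fun p : ℝ => φ p * (Complex.I * ((p / ℏ : ℝ) : ℂ)) := hφs.mul_right
    exact this.mul_left
  have Dxx : HasDerivAt (fun y : ℝ => deriv (fun z : ℝ => ψ z t) y)
      (∫ p : ℝ, φ2 p * (Complex.I * ((p / ℏ : ℝ) : ℂ)) *
        Complex.exp (Complex.I * (((-(p ^ 2 * t / (2 * m * ℏ)) : ℝ) : ℂ) + (x : ℂ) * ((p / ℏ : ℝ) : ℂ)))) x := by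
    have h := osc_hasDerivAt φ2 hφ2c hφ2s _ _ hθx hηx x
    have he : (fun y : ℝ => deriv (fun z : ℝ => ψ z t) y) = fun y : ℝ =>
        ∫ p : ℝ, φ2 p * Complex.exp (Complex.I * (((-(p ^ 2 * t / (2 * m * ℏ)) : ℝ) : ℂ) + (y : ℂ) * ((p / ℏ : ℝ) : ℂ))) := by
      funext y
      rw [(Dx y).deriv, ← integral_const_mul]
      refine integral_congr_ae (Filter.Eventually.of_forall fun p => ?_)
      simp [hφ2]; ring
    rw [he]
    exact h
  rw [Dt.deriv, Dxx.deriv]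
  rw [show Complex.I * (ℏ : ℂ) * (c * ∫ p : ℝ, φ p * (Complex.I * ((-(p ^ 2 / (2 * m * ℏ)) : ℝ) : ℂ)) *
        Complex.exp (Complex.I * (((p * x / ℏ : ℝ) : ℂ) + (t : ℂ) * ((-(p ^ 2 / (2 * m * ℏ)) : ℝ) : ℂ))))
      = ∫ p : ℝ, (Complex.I * (ℏ : ℂ) * c) * (φ p * (Complex.I * ((-(p ^ 2 / (2 * m * ℏ)) : ℝ) : ℂ)) *
        Complex.exp (Complex.I * (((p * x / ℏ : ℝ) : ℂ) + (t : ℂ) * ((-(p ^ 2 / (2 * m * ℏ)) : ℝ) : ℂ))))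
    from by rw [integral_const_mul]; ring]
  rw [show -((ℏ : ℂ) ^ 2 / (2 * (m : ℂ))) * ∫ p : ℝ, φ2 p * (Complex.I * ((p / ℏ : ℝ) : ℂ)) *
        Complex.exp (Complex.I * (((-(p ^ 2 * t / (2 * m * ℏ)) : ℝ) : ℂ) + (x : ℂ) * ((p / ℏ : ℝ) : ℂ)))
      = ∫ p : ℝ, (-((ℏ : ℂ) ^ 2 / (2 * (m : ℂ)))) * (φ2 p * (Complex.I * ((p / ℏ : ℝ) : ℂ)) *
        Complex.exp (Complex.I * (((-(p ^ 2 * t / (2 * m * ℏ)) : ℝ) : ℂ) + (x : ℂ) * ((p / ℏ : ℝ) : ℂ))))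
    from by rw [integral_const_mul]]
  refine integral_congr_ae (Filter.Eventually.of_forall fun p => ?_)
  dsimp only
  rw [← hexpT t p, ← hexpX x p, hφ2]
  push_cast
  field_simp
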